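/- Let a₄, a₅ ∈ ℝ, a₃ > 0, and define g(x,y) = a₄|x|^{3/2} + a₅y. Set a₈ = sup_{u≥0}(9a₄²u − 0.25a₃u²). Then for all x, x̄, y, ȳ ∈ ℝ: (g(x,y) − g(x̄,ȳ))² ≤ 2·max(a₈, a₅²)·(|x−x̄|² + |y−ȳ|²) + 0.25·a₃·|x−x̄|²·(x² + x̄²). -/
import Mathlib


set_option maxHeartbeats 1600000 in
theorem stmt_13 (a₃ a₄ a₅ a₈ : ℝ) (h₃ : 0 < a₃)
    (ha₈ : a₈ = sSup {v : ℝ | ∃ u : ℝ, 0 ≤ u ∧ v = 9 * a₄ ^ 2 * u - 0.25 * a₃ * u ^ 2}) :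
    ∀ x xb y yb : ℝ,
      ((a₄ * |x| ^ ((3:ℝ)/2) + a₅ * y) - (a₄ * |xb| ^ ((3:ℝ)/2) + a₅ * yb)) ^ 2
        ≤ 2 * (max a₈ (a₅ ^ 2)) * (|x - xb| ^ 2 + |y - yb| ^ 2)
          + 0.25 * a₃ * |x - xb| ^ 2 * (x ^ 2 + xb ^ 2) := by
  intro x xb y yb
  set s := Real.sqrt |x| with hsdef
  set t := Real.sqrt |xb| with htdef
  have hs : 0 ≤ s := Real.sqrt_nonneg _
  have ht : 0 ≤ t := Real.sqrt_nonneg _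
  have hs2 : s ^ 2 = |x| := Real.sq_sqrt (abs_nonneg x)
  have ht2 : t ^ 2 = |xb| := Real.sq_sqrt (abs_nonneg xb)
  have hx : |x| ^ ((3:ℝ)/2) = s ^ 3 := by
    rw [show (3:ℝ)/2 = (1/2)*3 by ring, Real.rpow_mul (abs_nonneg x),
      ← Real.sqrt_eq_rpow]
    exact_mod_cast Real.rpow_natCast s 3
  have hxb : |xb| ^ ((3:ℝ)/2) = t ^ 3 := by
    rw [show (3:ℝ)/2 = (1/2)*3 by ring, Real.rpow_mul (abs_nonneg xb),
      ← Real.sqrt_eq_rpow]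
    exact_mod_cast Real.rpow_natCast t 3
  clear_value s t
  have hbdd : BddAbove {v : ℝ | ∃ u : ℝ, 0 ≤ u ∧ v = 9 * a₄ ^ 2 * u - 0.25 * a₃ * u ^ 2} := by
    refine ⟨81 * a₄ ^ 4 / a₃, ?_⟩
    rintro v ⟨u, hu, rfl⟩
    rw [le_div_iff₀ h₃]
    nlinarith [sq_nonneg (a₃ * u - 18 * a₄ ^ 2)]
  -- the key a₈ bound at u/4 with u = s^2 + t^2
  have ha8 : 9 * a₄ ^ 2 * ((s ^ 2 + t ^ 2) / 4) - 0.25 * a₃ * ((s ^ 2 + t ^ 2) / 4) ^ 2 ≤ a₈ := by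
    rw [ha₈]
    exact le_csSup hbdd ⟨(s ^ 2 + t ^ 2) / 4, by positivity, rfl⟩
  have hmax1 : a₈ ≤ max a₈ (a₅ ^ 2) := le_max_left _ _
  have hmax2 : a₅ ^ 2 ≤ max a₈ (a₅ ^ 2) := le_max_right _ _
  -- cubic difference bound
  have hd : (s ^ 3 - t ^ 3) ^ 2 ≤ 9/4 * (s ^ 2 + t ^ 2) * (s ^ 2 - t ^ 2) ^ 2 := by
    nlinarith [sq_nonneg (s - t), sq_nonneg (s + t), mul_nonneg hs ht, sq_nonneg (s*t),
      sq_nonneg (s^2 - t^2), mul_nonneg (mul_nonneg hs ht) (sq_nonneg (s - t)),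
      mul_nonneg (mul_nonneg (mul_nonneg hs ht) hs) ht]
  -- abs difference bound
  have habs : (s ^ 2 - t ^ 2) ^ 2 ≤ |x - xb| ^ 2 := by
    rw [hs2, ht2]
    have h1 : |x| - |xb| ≤ |x - xb| := abs_sub_abs_le_abs_sub x xb
    have h2 : |xb| - |x| ≤ |x - xb| := by
      rw [abs_sub_comm]; exact abs_sub_abs_le_abs_sub xb x
    nlinarith [abs_nonneg (x - xb)]
  have hxA : x ^ 2 = s ^ 4 := by
    rw [← sq_abs x, ← hs2]; ring
  have hxbA : xb ^ 2 = t ^ 4 := by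
    rw [← sq_abs xb, ← ht2]; ring
  have hA : (0:ℝ) ≤ |x - xb| ^ 2 := sq_nonneg _
  have hu : (0:ℝ) ≤ s ^ 2 + t ^ 2 := by positivity
  rw [hx, hxb, hxA, hxbA]
  have hy : |y - yb| ^ 2 = (y - yb) ^ 2 := sq_abs _
  rw [hy]
  -- main chain
  have key : 2 * a₄ ^ 2 * (s ^ 3 - t ^ 3) ^ 2
      ≤ 2 * (max a₈ (a₅ ^ 2)) * |x - xb| ^ 2 + 0.25 * a₃ * |x - xb| ^ 2 * (s ^ 4 + t ^ 4) := by
    have h1 : 2 * a₄ ^ 2 * (s ^ 3 - t ^ 3) ^ 2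
        ≤ 9/2 * a₄ ^ 2 * (s ^ 2 + t ^ 2) * |x - xb| ^ 2 := by
      have := mul_le_mul_of_nonneg_left hd (by positivity : (0:ℝ) ≤ 2 * a₄ ^ 2)
      nlinarith [mul_le_mul_of_nonneg_left habs
        (by positivity : (0:ℝ) ≤ 9/2 * a₄ ^ 2 * (s ^ 2 + t ^ 2))]
    have h2 : 9/2 * a₄ ^ 2 * (s ^ 2 + t ^ 2) * |x - xb| ^ 2
        ≤ 2 * (max a₈ (a₅ ^ 2)) * |x - xb| ^ 2 + 0.25 * a₃ * |x - xb| ^ 2 * (s ^ 4 + t ^ 4) := by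
      nlinarith [mul_le_mul_of_nonneg_right (ha8.trans hmax1) hA,
        mul_nonneg (mul_nonneg h₃.le hA) (sq_nonneg (s ^ 2 - t ^ 2)),
        mul_nonneg (mul_nonneg h₃.le hA) (sq_nonneg (s ^ 2 + t ^ 2))]
    linarith
  have hE : 2 * a₅ ^ 2 * (y - yb) ^ 2 ≤ 2 * (max a₈ (a₅ ^ 2)) * (y - yb) ^ 2 := by
    nlinarith [mul_le_mul_of_nonneg_right hmax2 (sq_nonneg (y - yb))]
  nlinarith [sq_nonneg (a₄ * (s ^ 3 - t ^ 3) - a₅ * (y - yb)), key, hE]
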